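/- Let η:ℝ→ℝ be convex with a.e. derivative η', and let ρ∈ℝ. Among all measurable functions g:ℝ→ℝ with g(ξ)∈D_ξ for a.e. ξ (i.e. sgn(ξ)g(ξ)=|g(ξ)|≤1), g∈L¹(ℝ), and ∫_ℝ g(ξ)dξ = ρ, the function g(ξ)=χ(ρ,ξ) minimizes the functional g ↦ ∫_ℝ η'(ξ)·g(ξ)dξ, and the minimal value equals η(ρ)−η(0). If moreover η is strictly convex, then χ(ρ,·) is the unique minimizer (up to a.e. equality). -/

import Mathlib

open MeasureTheory Filter Topology Set

/-- The kinetic equilibrium (Maxwellian) function. -/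
noncomputable def chi (ρ ξ : ℝ) : ℝ :=
  if 0 < ξ ∧ ξ < ρ then 1 else if ρ < ξ ∧ ξ < 0 then -1 else 0

private lemma ftc_conv (η η' : ℝ → ℝ) (hconv : ConvexOn ℝ Set.univ η)
    (hmono : Monotone η')
    (hderiv : ∀ᵐ ξ ∂(volume : Measure ℝ), HasDerivAt η (η' ξ) ξ)
    {a b : ℝ} (hab : a ≤ b) :
    (∫ ξ in a..b, η' ξ) = η b - η a := by
  have hcont : Continuous η := continuousOn_univ.1 (hconv.continuousOn isOpen_univ)
  set F : ℝ → ℝ := fun x => ∫ t in (0:ℝ)..x, η t with hFdef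
  have hFd : ∀ x : ℝ, HasDerivAt F (η x) x := fun x =>
    (intervalIntegral.integral_hasStrictDerivAt_right (hcont.intervalIntegrable _ _)
      (hcont.stronglyMeasurable.stronglyMeasurableAtFilter) (hcont.continuousAt)).hasDerivAt
  have hFdiff : ∀ c d : ℝ, (∫ t in c..d, η t) = F d - F c := by
    intro c d
    have := intervalIntegral.integral_add_adjacent_intervals (μ := volume) (f := η)
      (a := (0:ℝ)) (b := c) (c := d) (hcont.intervalIntegrable _ _) (hcont.intervalIntegrable _ _)
    simp only [hFdef]
    linarith [this]
  have hη'int : ∀ c d : ℝ, IntervalIntegrable η' volume c d := fun c d =>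
    hmono.intervalIntegrable
  -- upper bound
  have hup : ∀ h : ℝ, 0 < h →
      (∫ ξ in a..b, η' ξ) ≤ (F (b+h) - F b)/h - (F (a+h) - F a)/h := by
    intro h hh
    have hc1 : Continuous fun ξ : ℝ => η (ξ + h) := hcont.comp (continuous_add_right h)
    have hint2 : IntervalIntegrable (fun ξ => (η (ξ+h) - η ξ)/h) volume a b :=
      ((hc1.sub hcont).div_const h).intervalIntegrable _ _
    have key : (∫ ξ in a..b, η' ξ) ≤ ∫ ξ in a..b, (η (ξ+h) - η ξ)/h := by
      refine intervalIntegral.integral_mono_ae hab (hη'int a b) hint2 ?_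
      filter_upwards [hderiv] with ξ hξ
      have hs := hconv.le_slope_of_hasDerivAt (Set.mem_univ ξ) (Set.mem_univ (ξ+h))
        (by linarith) hξ
      rw [slope_def_field] at hs
      have he : ξ + h - ξ = h := by ring
      rw [he] at hs
      exact hs
    have e2 : (∫ ξ in a..b, η (ξ+h)) = F (b+h) - F (a+h) := by
      rw [intervalIntegral.integral_comp_add_right]; exact hFdiff _ _
    have e3 : (∫ ξ in a..b, η ξ) = F b - F a := hFdiff a b
    have e1 : (∫ ξ in a..b, (η (ξ+h) - η ξ)/h)
        = ((F (b+h) - F (a+h)) - (F b - F a))/h := by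
      rw [intervalIntegral.integral_div,
        intervalIntegral.integral_sub (hc1.intervalIntegrable _ _) (hcont.intervalIntegrable _ _), e2, e3]
    rw [e1] at key
    have : ((F (b+h) - F (a+h)) - (F b - F a))/h
        = (F (b+h) - F b)/h - (F (a+h) - F a)/h := by ring
    linarith [key, this.symm.le, this.le]
  -- lower bound
  have hlo : ∀ h : ℝ, 0 < h →
      (F b - F (b-h))/h - (F a - F (a-h))/h ≤ ∫ ξ in a..b, η' ξ := by
    intro h hh
    have hc1 : Continuous fun ξ : ℝ => η (ξ - h) := hcont.comp (continuous_sub_right h)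
    have hint2 : IntervalIntegrable (fun ξ => (η ξ - η (ξ-h))/h) volume a b :=
      ((hcont.sub hc1).div_const h).intervalIntegrable _ _
    have key : (∫ ξ in a..b, (η ξ - η (ξ-h))/h) ≤ ∫ ξ in a..b, η' ξ := by
      refine intervalIntegral.integral_mono_ae hab hint2 (hη'int a b) ?_
      filter_upwards [hderiv] with ξ hξ
      have hs := hconv.slope_le_of_hasDerivAt (Set.mem_univ (ξ-h)) (Set.mem_univ ξ)
        (by linarith) hξ
      rw [slope_def_field] at hs
      have he : ξ - (ξ - h) = h := by ring
      rw [he] at hs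
      exact hs
    have e2 : (∫ ξ in a..b, η (ξ-h)) = F (b-h) - F (a-h) := by
      rw [intervalIntegral.integral_comp_sub_right]; exact hFdiff _ _
    have e3 : (∫ ξ in a..b, η ξ) = F b - F a := hFdiff a b
    have e1 : (∫ ξ in a..b, (η ξ - η (ξ-h))/h)
        = ((F b - F a) - (F (b-h) - F (a-h)))/h := by
      rw [intervalIntegral.integral_div,
        intervalIntegral.integral_sub (hcont.intervalIntegrable _ _)
          (hc1.intervalIntegrable _ _), e2, e3]
    rw [e1] at key
    have : ((F b - F a) - (F (b-h) - F (a-h)))/h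
        = (F b - F (b-h))/h - (F a - F (a-h))/h := by ring
    linarith
  -- limits
  have l1 : ∀ x : ℝ, Tendsto (fun h : ℝ => (F (x+h) - F x)/h) (𝓝[>] (0:ℝ)) (𝓝 (η x)) := by
    intro x
    have := (hFd x).tendsto_slope_zero_right
    simpa [div_eq_inv_mul] using this
  have l2 : ∀ x : ℝ, Tendsto (fun h : ℝ => (F x - F (x-h))/h) (𝓝[>] (0:ℝ)) (𝓝 (η x)) := by
    intro x
    have h1 := (hFd x).tendsto_slope_zero_left
    have hneg : Tendsto (fun h : ℝ => -h) (𝓝[>] (0:ℝ)) (𝓝[<] (0:ℝ)) := by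
      refine tendsto_nhdsWithin_of_tendsto_nhds_of_eventually_within _ ?_ ?_
      · exact (continuous_neg.tendsto' 0 0 (by simp)).mono_left nhdsWithin_le_nhds
      · filter_upwards [self_mem_nhdsWithin] with x (hx : (0:ℝ) < x)
        simpa using hx
    have := h1.comp hneg
    have heq : ∀ h : ℝ, ((fun t : ℝ => t⁻¹ • (F (x + t) - F x)) ∘ fun h : ℝ => -h) h
        = (F x - F (x-h))/h := by
      intro h
      simp only [Function.comp_apply, smul_eq_mul]
      rw [show x + -h = x - h by ring, inv_neg, div_eq_inv_mul]
      ring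
    rw [show (fun h : ℝ => (F x - F (x-h))/h) = ((fun t : ℝ => t⁻¹ • (F (x + t) - F x)) ∘ fun h : ℝ => -h) from (funext fun h => (heq h).symm)]
    exact this
  have hub : (∫ ξ in a..b, η' ξ) ≤ η b - η a := by
    refine ge_of_tendsto ((l1 b).sub (l1 a)) ?_
    filter_upwards [self_mem_nhdsWithin] with h (hh : 0 < h)
    exact hup h hh
  have hlb : η b - η a ≤ ∫ ξ in a..b, η' ξ := by
    refine le_of_tendsto ((l2 b).sub (l2 a)) ?_
    filter_upwards [self_mem_nhdsWithin] with h (hh : 0 < h)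
    exact hlo h hh
  linarith


private lemma chi_eq_pos {ρ : ℝ} (hρ : 0 ≤ ρ) :
    (fun ξ => chi ρ ξ) = (Set.Ioo 0 ρ).indicator (fun _ => (1:ℝ)) := by
  funext ξ
  by_cases h : 0 < ξ ∧ ξ < ρ
  · have : ξ ∈ Set.Ioo 0 ρ := h
    simp [chi, h, this]
  · have h2 : ¬(ρ < ξ ∧ ξ < 0) := by rintro ⟨u, v⟩; linarith
    have : ξ ∉ Set.Ioo 0 ρ := by simpa [Set.mem_Ioo] using h
    simp [chi, h, h2, this]

private lemma chi_eq_neg {ρ : ℝ} (hρ : ρ < 0) :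
    (fun ξ => chi ρ ξ) = (Set.Ioo ρ 0).indicator (fun _ => (-1:ℝ)) := by
  funext ξ
  have h1 : ¬(0 < ξ ∧ ξ < ρ) := by rintro ⟨u, v⟩; linarith
  by_cases h : ρ < ξ ∧ ξ < 0
  · have : ξ ∈ Set.Ioo ρ 0 := h
    simp [chi, h, h1, this]
  · have : ξ ∉ Set.Ioo ρ 0 := by simpa [Set.mem_Ioo] using h
    simp [chi, h, h1, this]

theorem chi_minimizes_kinetic_entropy (η η' : ℝ → ℝ)
    (hconv : ConvexOn ℝ Set.univ η) (hmono : Monotone η')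
    (hderiv : ∀ᵐ ξ ∂(volume : Measure ℝ), HasDerivAt η (η' ξ) ξ) (ρ : ℝ) :
    -- χ(ρ,·) satisfies the constraints
    ((∀ ξ : ℝ, Real.sign ξ * chi ρ ξ = |chi ρ ξ| ∧ |chi ρ ξ| ≤ 1) ∧
      Integrable (fun ξ => chi ρ ξ) ∧ (∫ ξ : ℝ, chi ρ ξ) = ρ) ∧
    -- its value is η(ρ) − η(0)
    (∫ ξ : ℝ, η' ξ * chi ρ ξ) = η ρ - η 0 ∧
    -- it minimizes the functional among all admissible g
    (∀ g : ℝ → ℝ,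
      (∀ᵐ ξ ∂(volume : Measure ℝ), Real.sign ξ * g ξ = |g ξ| ∧ |g ξ| ≤ 1) →
      Integrable g → (∫ ξ : ℝ, g ξ) = ρ →
      Integrable (fun ξ => η' ξ * g ξ) →
      η ρ - η 0 ≤ ∫ ξ : ℝ, η' ξ * g ξ) ∧
    -- if η is strictly convex the minimizer is unique up to a.e. equality
    (StrictConvexOn ℝ Set.univ η →
      ∀ g : ℝ → ℝ,
        (∀ᵐ ξ ∂(volume : Measure ℝ), Real.sign ξ * g ξ = |g ξ| ∧ |g ξ| ≤ 1) →
        Integrable g → (∫ ξ : ℝ, g ξ) = ρ →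
        Integrable (fun ξ => η' ξ * g ξ) →
        (∫ ξ : ℝ, η' ξ * g ξ) = η ρ - η 0 →
        g =ᵐ[(volume : Measure ℝ)] fun ξ => chi ρ ξ) := by
  -- pointwise constraint for chi
  have con1 : ∀ ξ : ℝ, Real.sign ξ * chi ρ ξ = |chi ρ ξ| ∧ |chi ρ ξ| ≤ 1 := by
    intro ξ
    unfold chi
    split_ifs with h1 h2
    · rw [Real.sign_of_pos h1.1]; norm_num
    · rw [Real.sign_of_neg h2.2]; norm_num
    · norm_num
  -- integrability and values for chi
  have pack : Integrable (fun ξ => chi ρ ξ) ∧ (∫ ξ : ℝ, chi ρ ξ) = ρ ∧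
      Integrable (fun ξ => η' ξ * chi ρ ξ) ∧ (∫ ξ : ℝ, η' ξ * chi ρ ξ) = η ρ - η 0 := by
    rcases le_or_gt 0 ρ with hρ | hρ
    · have hchieq := chi_eq_pos hρ
      have hIOn : IntegrableOn η' (Set.Ioo 0 ρ) volume :=
        ((hmono.monotoneOn _).integrableOn_isCompact (isCompact_Icc (a := (0:ℝ)) (b := ρ))).mono_set
          Set.Ioo_subset_Icc_self
      have hmul_eq : (fun ξ => η' ξ * chi ρ ξ) = (Set.Ioo 0 ρ).indicator η' := by
        funext ξ
        have := congrFun hchieq ξ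
        by_cases h : ξ ∈ Set.Ioo 0 ρ <;> simp [this, h]
      refine ⟨?_, ?_, ?_, ?_⟩
      · rw [hchieq]
        exact (integrable_indicator_iff measurableSet_Ioo).2
          (integrableOn_const (by simp [Real.volume_Ioo]))
      · rw [hchieq, integral_indicator measurableSet_Ioo]
        simp [Real.volume_Ioo, ENNReal.toReal_ofReal hρ, hρ]
      · rw [hmul_eq]
        exact (integrable_indicator_iff measurableSet_Ioo).2 hIOn
      · rw [hmul_eq, integral_indicator measurableSet_Ioo, ← integral_Ioc_eq_integral_Ioo,
          ← intervalIntegral.integral_of_le hρ]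
        exact ftc_conv η η' hconv hmono hderiv hρ
    · have hchieq := chi_eq_neg hρ
      have hIOn : IntegrableOn η' (Set.Ioo ρ 0) volume :=
        ((hmono.monotoneOn _).integrableOn_isCompact (isCompact_Icc (a := ρ) (b := (0:ℝ)))).mono_set
          Set.Ioo_subset_Icc_self
      have hmul_eq : (fun ξ => η' ξ * chi ρ ξ) = fun ξ => -((Set.Ioo ρ 0).indicator η' ξ) := by
        funext ξ
        have := congrFun hchieq ξ
        by_cases h : ξ ∈ Set.Ioo ρ 0 <;> simp [this, h]
      refine ⟨?_, ?_, ?_, ?_⟩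
      · rw [hchieq]
        exact (integrable_indicator_iff measurableSet_Ioo).2
          (integrableOn_const (by simp [Real.volume_Ioo]))
      · rw [hchieq, integral_indicator measurableSet_Ioo]
        simp [Real.volume_Ioo, ENNReal.toReal_ofReal (by linarith : (0:ℝ) ≤ -ρ), max_eq_left (by linarith : (0:ℝ) ≤ -ρ)]
      · rw [hmul_eq]
        exact ((integrable_indicator_iff measurableSet_Ioo).2 hIOn).neg
      · rw [hmul_eq, integral_neg, integral_indicator measurableSet_Ioo,
          ← integral_Ioc_eq_integral_Ioo, ← intervalIntegral.integral_of_le hρ.le]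
        rw [ftc_conv η η' hconv hmono hderiv hρ.le]
        ring
  obtain ⟨hchi_int, hchi_sum, hmul_int, hval⟩ := pack
  -- key pointwise inequality
  have key : ∀ g : ℝ → ℝ,
      (∀ᵐ ξ ∂(volume : Measure ℝ), Real.sign ξ * g ξ = |g ξ| ∧ |g ξ| ≤ 1) →
      (0 : ℝ → ℝ) ≤ᵐ[volume] fun ξ => (η' ξ - η' ρ) * (g ξ - chi ρ ξ) := by
    intro g hadm
    filter_upwards [hadm] with ξ hξ
    obtain ⟨hsgn, hle⟩ := hξ
    have hbp : 0 < ξ → 0 ≤ g ξ ∧ g ξ ≤ 1 := by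
      intro h
      rw [Real.sign_of_pos h, one_mul] at hsgn
      exact ⟨hsgn.symm ▸ abs_nonneg _, hsgn.symm ▸ hle⟩
    have hbn : ξ < 0 → -1 ≤ g ξ ∧ g ξ ≤ 0 := by
      intro h
      rw [Real.sign_of_neg h, neg_one_mul] at hsgn
      constructor
      · have : -g ξ ≤ 1 := hsgn ▸ hle
        linarith
      · have : 0 ≤ -g ξ := hsgn ▸ abs_nonneg _
        linarith
    have hb0 : ξ = 0 → g ξ = 0 := by
      intro h
      rw [h, Real.sign_zero, zero_mul] at hsgn
      have := abs_eq_zero.1 hsgn.symm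
      rwa [h]
    show (0:ℝ) ≤ (η' ξ - η' ρ) * (g ξ - chi ρ ξ)
    rcases lt_trichotomy ξ ρ with hlt | heq | hgt
    · have h1 : g ξ - chi ρ ξ ≤ 0 := by
        rcases lt_trichotomy ξ 0 with hx | hx | hx
        · have hA : ¬(0 < ξ ∧ ξ < ρ) := by rintro ⟨u, v⟩; linarith
          have hB : ¬(ρ < ξ ∧ ξ < 0) := by rintro ⟨u, v⟩; linarith
          simp only [chi, if_neg hA, if_neg hB]
          linarith [(hbn hx).2]
        · have hA : ¬(0 < ξ ∧ ξ < ρ) := by rintro ⟨u, v⟩; linarith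
          have hB : ¬(ρ < ξ ∧ ξ < 0) := by rintro ⟨u, v⟩; linarith
          simp only [chi, if_neg hA, if_neg hB]
          linarith [hb0 hx]
        · have hA : 0 < ξ ∧ ξ < ρ := ⟨hx, hlt⟩
          simp only [chi, if_pos hA]
          linarith [(hbp hx).2]
      have h2 : η' ξ - η' ρ ≤ 0 := sub_nonpos.2 (hmono hlt.le)
      nlinarith
    · rw [heq]; simp
    · have h1 : 0 ≤ g ξ - chi ρ ξ := by
        rcases lt_trichotomy ξ 0 with hx | hx | hx
        · have hA : ¬(0 < ξ ∧ ξ < ρ) := by rintro ⟨u, v⟩; linarith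
          have hB : ρ < ξ ∧ ξ < 0 := ⟨hgt, hx⟩
          simp only [chi, if_neg hA, if_pos hB]
          linarith [(hbn hx).1]
        · have hA : ¬(0 < ξ ∧ ξ < ρ) := by rintro ⟨u, v⟩; linarith
          have hB : ¬(ρ < ξ ∧ ξ < 0) := by rintro ⟨u, v⟩; linarith
          simp only [chi, if_neg hA, if_neg hB]
          linarith [hb0 hx]
        · have hA : ¬(0 < ξ ∧ ξ < ρ) := by rintro ⟨u, v⟩; linarith
          have hB : ¬(ρ < ξ ∧ ξ < 0) := by rintro ⟨u, v⟩; linarith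
          simp only [chi, if_neg hA, if_neg hB]
          linarith [(hbp hx).1]
      have h2 : 0 ≤ η' ξ - η' ρ := sub_nonneg.2 (hmono hgt.le)
      exact mul_nonneg h2 h1
  -- integral identity
  have ident : ∀ g : ℝ → ℝ, Integrable g → (∫ ξ : ℝ, g ξ) = ρ →
      Integrable (fun ξ => η' ξ * g ξ) →
      (∫ ξ : ℝ, (η' ξ - η' ρ) * (g ξ - chi ρ ξ)) = (∫ ξ : ℝ, η' ξ * g ξ) - (η ρ - η 0) := by
    intro g hg hgsum hgint
    have e : (fun ξ => (η' ξ - η' ρ) * (g ξ - chi ρ ξ))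
        = fun ξ => (η' ξ * g ξ - η' ξ * chi ρ ξ) - (η' ρ * g ξ - η' ρ * chi ρ ξ) := by
      funext ξ; ring
    have A : Integrable (fun ξ => η' ξ * g ξ - η' ξ * chi ρ ξ) volume := hgint.sub hmul_int
    have B : Integrable (fun ξ => η' ρ * g ξ - η' ρ * chi ρ ξ) volume :=
      (hg.const_mul (η' ρ)).sub (hchi_int.const_mul (η' ρ))
    have C : Integrable (fun ξ => η' ρ * g ξ) volume := hg.const_mul (η' ρ)
    have D : Integrable (fun ξ => η' ρ * chi ρ ξ) volume := hchi_int.const_mul (η' ρ)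
    rw [e, integral_sub A B, integral_sub hgint hmul_int, integral_sub C D,
      integral_const_mul, integral_const_mul, hgsum, hchi_sum, hval]
    ring
  refine ⟨⟨con1, hchi_int, hchi_sum⟩, hval, ?_, ?_⟩
  · -- minimization
    intro g hadm hg hgsum hgint
    have h0 : 0 ≤ ∫ ξ : ℝ, (η' ξ - η' ρ) * (g ξ - chi ρ ξ) :=
      integral_nonneg_of_ae (key g hadm)
    rw [ident g hg hgsum hgint] at h0
    linarith
  · -- uniqueness
    intro hstrict g hadm hg hgsum hgint heq
    have e : (fun ξ => (η' ξ - η' ρ) * (g ξ - chi ρ ξ))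
        = fun ξ => (η' ξ * g ξ - η' ξ * chi ρ ξ) - (η' ρ * g ξ - η' ρ * chi ρ ξ) := by
      funext ξ; ring
    have hint : Integrable (fun ξ => (η' ξ - η' ρ) * (g ξ - chi ρ ξ)) := by
      rw [e]
      exact (hgint.sub hmul_int).sub ((hg.const_mul _).sub (hchi_int.const_mul _))
    have hzero : (∫ ξ : ℝ, (η' ξ - η' ρ) * (g ξ - chi ρ ξ)) = 0 := by
      rw [ident g hg hgsum hgint, heq]; ring
    have hae0 : (fun ξ => (η' ξ - η' ρ) * (g ξ - chi ρ ξ)) =ᵐ[(volume : Measure ℝ)] 0 := by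
      refine (integral_eq_zero_iff_of_nonneg_ae ?_ hint).1 hzero
      exact key g hadm
    -- η' ξ ≠ η' ρ almost everywhere
    have hT : volume {ξ : ℝ | η' ξ = η' ρ} = 0 := by
      set E := {ξ : ℝ | HasDerivAt η (η' ξ) ξ} with hE
      have hEc : volume {ξ : ℝ | ¬ HasDerivAt η (η' ξ) ξ} = 0 := ae_iff.1 hderiv
      have hsub : ({ξ : ℝ | η' ξ = η' ρ} ∩ E).Subsingleton := by
        intro x hx y hy
        by_contra hxy
        have hkey : ∀ u v : ℝ, u ∈ {ξ : ℝ | η' ξ = η' ρ} ∩ E →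
            v ∈ {ξ : ℝ | η' ξ = η' ρ} ∩ E → u < v → False := by
          intro u v hu hv huv
          have h1 := hstrict.lt_slope_of_hasDerivAt (Set.mem_univ u) (Set.mem_univ v) huv hu.2
          have h2 := hstrict.slope_lt_of_hasDerivAt (Set.mem_univ u) (Set.mem_univ v) huv hv.2
          have e1 : η' u = η' ρ := hu.1
          have e2 : η' v = η' ρ := hv.1
          rw [e1] at h1; rw [e2] at h2
          linarith
        rcases lt_or_gt_of_ne hxy with hlt | hlt
        · exact hkey x y hx hy hlt
        · exact hkey y x hy hx hlt
      have h1 : volume ({ξ : ℝ | η' ξ = η' ρ} ∩ E) = 0 := hsub.measure_zero _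
      have hsubset : {ξ : ℝ | η' ξ = η' ρ} ⊆ ({ξ : ℝ | η' ξ = η' ρ} ∩ E) ∪ {ξ : ℝ | ¬ HasDerivAt η (η' ξ) ξ} := by
        intro x hx
        by_cases hxE : x ∈ E
        · exact Or.inl ⟨hx, hxE⟩
        · exact Or.inr hxE
      exact measure_mono_null hsubset (measure_union_null h1 hEc)
    have hne : ∀ᵐ ξ ∂(volume : Measure ℝ), η' ξ ≠ η' ρ := by
      rw [ae_iff]
      simpa using hT
    filter_upwards [hae0, hne] with ξ h1 h2
    have h1' : (η' ξ - η' ρ) * (g ξ - chi ρ ξ) = 0 := h1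
    rcases mul_eq_zero.1 h1' with h | h
    · exact absurd (by linarith : η' ξ = η' ρ) h2
    · have := sub_eq_zero.1 h
      simpa using this
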